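/- arXiv:1910.02418 — 2 statements merged into one kernel-verified Lean document; each statement's English description precedes it below -/
import Mathlib

section
/- For every integer n ≥ 51, f(n)² − f(n−4)·f(n+4) > 0. -/
set_option maxHeartbeats 1000000

open Finset

/-- `g n` is the number of subsets of `{1,...,n}` whose gcd is not 1 (including `∅`). -/
def g (n : ℕ) : ℕ :=
  ((Finset.Icc 1 n).powerset.filter (fun A => ¬ A.gcd id = 1)).card

/-- `f n` is the number of relatively prime subsets of `{1, 2, ..., n}`,
i.e. subsets `A` with `gcd A = 1` (such subsets are automatically nonempty). -/
def f (n : ℕ) : ℕ :=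
  ((Finset.Icc 1 n).powerset.filter (fun A => A.gcd id = 1)).card

lemma f_add_g (n : ℕ) : f n + g n = 2 ^ n := by
  have := Finset.card_filter_add_card_filter_not
    (s := (Finset.Icc 1 n).powerset) (p := fun A => A.gcd id = 1)
  rw [Finset.card_powerset, Nat.card_Icc] at this
  simpa [f, g] using this

lemma g_lower (m : ℕ) : 2 ^ (m / 2) ≤ g m := by
  classical
  have hsub : ((Finset.Icc 1 m).filter (fun x => 2 ∣ x)).powerset ⊆
      ((Finset.Icc 1 m).powerset.filter (fun A => ¬ A.gcd id = 1)) := by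
    intro A hA
    rw [Finset.mem_powerset] at hA
    rw [Finset.mem_filter, Finset.mem_powerset]
    refine ⟨hA.trans (Finset.filter_subset _ _), ?_⟩
    intro hgcd
    have h2 : 2 ∣ A.gcd id := by
      apply Finset.dvd_gcd
      intro x hx
      exact (Finset.mem_filter.mp (hA hx)).2
    rw [hgcd] at h2
    omega
  have hcard := Finset.card_le_card hsub
  rw [Finset.card_powerset] at hcard
  have hdiv : ((Finset.Icc 1 m).filter (fun x => 2 ∣ x)).card = m / 2 := by
    rw [show Finset.Icc 1 m = Finset.Ioc 0 m from Finset.Icc_add_one_left_eq_Ioc 0 m]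
    exact Nat.Ioc_filter_dvd_card_eq_div m 2
  rw [hdiv] at hcard
  exact hcard

lemma aux_lt (n : ℕ) (hn : 51 ≤ n) : n < 2 ^ (n / 8) := by
  induction n using Nat.strong_induction_on with
  | _ n ih =>
    by_cases h : n ≤ 58
    · calc n < 64 := by omega
        _ = 2 ^ 6 := by norm_num
        _ ≤ 2 ^ (n / 8) := Nat.pow_le_pow_right (by norm_num) (by omega)
    · have h1 := ih (n - 8) (by omega) (by omega)
      have h2 : (n - 8) / 8 + 1 = n / 8 := by omega
      calc n ≤ 2 * (n - 8) := by omega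
        _ < 2 * 2 ^ ((n - 8) / 8) := by omega
        _ = 2 ^ ((n - 8) / 8 + 1) := by ring
        _ = 2 ^ (n / 8) := by rw [h2]

lemma g_upper (n : ℕ) (hn : 51 ≤ n) : g n < 2 * 2 ^ (n / 2) := by
  classical
  -- union bound
  have hsub : ((Finset.Icc 1 n).powerset.filter (fun A => ¬ A.gcd id = 1)) ⊆
      insert ∅ ((Finset.Icc 2 n).biUnion
        (fun d => ((Finset.Icc 1 n).filter (fun x => d ∣ x)).powerset)) := by
    intro A hA
    rw [Finset.mem_filter, Finset.mem_powerset] at hA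
    obtain ⟨hAsub, hgcd⟩ := hA
    rcases A.eq_empty_or_nonempty with rfl | ⟨a, ha⟩
    · exact Finset.mem_insert_self _ _
    · apply Finset.mem_insert_of_mem
      rw [Finset.mem_biUnion]
      refine ⟨A.gcd id, ?_, ?_⟩
      · have hda : A.gcd id ∣ a := Finset.gcd_dvd ha
        have ha' := Finset.mem_Icc.mp (hAsub ha)
        have hpos : 0 < A.gcd id := by
          rcases Nat.eq_zero_or_pos (A.gcd id) with h0 | h0
          · rw [h0] at hda; omega
          · exact h0
        have hle : A.gcd id ≤ a := Nat.le_of_dvd (by omega) hda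
        rw [Finset.mem_Icc]
        constructor
        · omega
        · omega
      · rw [Finset.mem_powerset]
        intro x hx
        rw [Finset.mem_filter]
        exact ⟨hAsub hx, Finset.gcd_dvd hx⟩
  have hcard : g n ≤ 1 + ∑ d ∈ Finset.Icc 2 n, 2 ^ (n / d) := by
    have h1 := Finset.card_le_card hsub
    have h2 := Finset.card_insert_le (∅ : Finset ℕ)
      ((Finset.Icc 2 n).biUnion
        (fun d => ((Finset.Icc 1 n).filter (fun x => d ∣ x)).powerset))
    have h3 := Finset.card_biUnion_le (s := Finset.Icc 2 n)
      (t := fun d => ((Finset.Icc 1 n).filter (fun x => d ∣ x)).powerset)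
    have h4 : ∀ d, (((Finset.Icc 1 n).filter (fun x => d ∣ x)).powerset).card
        = 2 ^ (n / d) := by
      intro d
      rw [Finset.card_powerset,
        show Finset.Icc 1 n = Finset.Ioc 0 n from Finset.Icc_add_one_left_eq_Ioc 0 n,
        Nat.Ioc_filter_dvd_card_eq_div]
    simp only [h4] at h3
    have : g n ≤ _ := h1
    omega
  -- split the sum
  have hsplit : Finset.Icc 2 n = Finset.Icc 2 4 ∪ Finset.Icc 5 n := by
    ext x; simp only [Finset.mem_union, Finset.mem_Icc]; omega
  have hdisj : Disjoint (Finset.Icc 2 4) (Finset.Icc 5 n) := by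
    rw [Finset.disjoint_left]
    intro a ha hb
    rw [Finset.mem_Icc] at ha hb
    omega
  have hsum : ∑ d ∈ Finset.Icc 2 n, 2 ^ (n / d)
      = (2 ^ (n / 2) + 2 ^ (n / 3) + 2 ^ (n / 4)) + ∑ d ∈ Finset.Icc 5 n, 2 ^ (n / d) := by
    rw [hsplit, Finset.sum_union hdisj]
    congr 1
    rw [show Finset.Icc 2 4 = {2, 3, 4} from by decide]
    simp [Finset.sum_insert, add_assoc]
  have htail : ∑ d ∈ Finset.Icc 5 n, 2 ^ (n / d) ≤ n * 2 ^ (n / 5) := by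
    calc ∑ d ∈ Finset.Icc 5 n, 2 ^ (n / d) ≤ ∑ _d ∈ Finset.Icc 5 n, 2 ^ (n / 5) := by
          apply Finset.sum_le_sum
          intro d hd
          rw [Finset.mem_Icc] at hd
          exact Nat.pow_le_pow_right (by norm_num) (Nat.div_le_div_left hd.1 (by norm_num))
      _ = (Finset.Icc 5 n).card * 2 ^ (n / 5) := by rw [Finset.sum_const, smul_eq_mul]
      _ ≤ n * 2 ^ (n / 5) := by
          apply Nat.mul_le_mul_right
          rw [Nat.card_Icc]; omega
  -- numeric bounds
  have hb3 : 2 ^ (n / 3) ≤ 2 ^ (n / 2 - 3) := Nat.pow_le_pow_right (by norm_num) (by omega)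
  have hb4 : 2 ^ (n / 4) ≤ 2 ^ (n / 2 - 3) := Nat.pow_le_pow_right (by norm_num) (by omega)
  have hb5 : n * 2 ^ (n / 5) < 2 ^ (n / 2 - 3) := by
    calc n * 2 ^ (n / 5) < 2 ^ (n / 8) * 2 ^ (n / 5) := by
          exact Nat.mul_lt_mul_of_lt_of_le (aux_lt n hn) (le_refl _) (by positivity)
      _ = 2 ^ (n / 8 + n / 5) := by rw [pow_add]
      _ ≤ 2 ^ (n / 2 - 3) := Nat.pow_le_pow_right (by norm_num) (by omega)
  have hb1 : 0 < 2 ^ (n / 2 - 3) := by positivity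
  have hfinal : 2 ^ (n / 3) + 2 ^ (n / 4) + n * 2 ^ (n / 5) + 1 < 2 ^ (n / 2) := by
    have h8 : 8 * 2 ^ (n / 2 - 3) = 2 ^ (n / 2) := by
      rw [show (8 : ℕ) = 2 ^ 3 from rfl, ← pow_add]
      congr 1
      omega
    omega
  omega

theorem stmt_6 (n : ℕ) (hn : 51 ≤ n) :
    (f n : ℤ) ^ 2 - f (n - 4) * f (n + 4) > 0 := by
  have e1 := f_add_g n
  have e2 := f_add_g (n - 4)
  have e3 := f_add_g (n + 4)
  have h4 := g_lower (n - 4)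
  have h5 := g_upper n hn
  -- set up integer variables
  set X : ℤ := 2 ^ (n - 4) with hX
  set Y : ℤ := 2 ^ ((n - 4) / 2) with hY
  have hXpos : (0 : ℤ) < X := by positivity
  have hYpos : (0 : ℤ) < Y := by positivity
  have hXY : Y ≤ X := by
    rw [hX, hY]
    exact pow_le_pow_right₀ (by norm_num) (by omega)
  have h2n : ((2 : ℤ)) ^ n = 16 * X := by
    rw [hX, show (16 : ℤ) = 2 ^ 4 from by norm_num, ← pow_add]; congr 1; omega
  have h2n4 : ((2 : ℤ)) ^ (n + 4) = 256 * X := by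
    rw [hX, show (256 : ℤ) = 2 ^ 8 from by norm_num, ← pow_add]; congr 1; omega
  have h2half : ((2 : ℤ)) ^ (n / 2) = 4 * Y := by
    rw [hY, show (4 : ℤ) = 2 ^ 2 from rfl, ← pow_add]; congr 1; omega
  have e1' : (f n : ℤ) = 16 * X - g n := by
    have : (f n : ℤ) + g n = 2 ^ n := by exact_mod_cast e1
    rw [h2n] at this; linarith
  have e2' : (f (n - 4) : ℤ) = X - g (n - 4) := by
    have : (f (n - 4) : ℤ) + g (n - 4) = 2 ^ (n - 4) := by exact_mod_cast e2
    rw [← hX] at this; linarith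
  have e3' : (f (n + 4) : ℤ) ≤ 256 * X := by
    have : (f (n + 4) : ℤ) + g (n + 4) = 2 ^ (n + 4) := by exact_mod_cast e3
    rw [h2n4] at this
    have hg : (0 : ℤ) ≤ g (n + 4) := Int.natCast_nonneg _
    linarith
  have h4' : Y ≤ (g (n - 4) : ℤ) := by
    rw [hY]; exact_mod_cast h4
  have h5' : (g n : ℤ) ≤ 8 * Y - 1 := by
    have : (g n : ℤ) < 2 * 2 ^ (n / 2) := by exact_mod_cast h5
    rw [h2half] at this; linarith
  have hgn : (0 : ℤ) ≤ g n := Int.natCast_nonneg _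
  have hfa : (0 : ℤ) ≤ f (n - 4) := Int.natCast_nonneg _
  have hfa' : (f (n - 4) : ℤ) ≤ X - Y := by rw [e2']; linarith
  have key1 : (f n : ℤ) ^ 2 ≥ 256 * X ^ 2 - 32 * X * (g n) := by
    rw [e1']; nlinarith [sq_nonneg ((g n : ℤ))]
  have key2 : (f (n - 4) : ℤ) * f (n + 4) ≤ (X - Y) * (256 * X) := by
    calc (f (n - 4) : ℤ) * f (n + 4) ≤ (f (n - 4) : ℤ) * (256 * X) := by
          apply mul_le_mul_of_nonneg_left e3' hfa
      _ ≤ (X - Y) * (256 * X) := by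
          apply mul_le_mul_of_nonneg_right hfa' (by linarith)
  nlinarith [key1, key2, h5', hXpos]
end

section
/- For every integer n ≥ 36, f(n)² − f(n−5)·f(n+5) > 0. -/
open Finset in
lemma mult_card (m d : ℕ) : ((Finset.Icc 1 m).filter (fun a => d ∣ a)).card = m / d := by
  rw [show (1:ℕ) = 0 + 1 from rfl, Finset.Icc_add_one_left_eq_Ioc]
  exact Nat.Ioc_filter_dvd_card_eq_div m d

lemma f_upper (m : ℕ) : f m + 2 ^ (m / 2) ≤ 2 ^ m := by
  classical
  set S := (Finset.Icc 1 m).powerset.filter (fun A => A.gcd id = 1) with hS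
  set P := ((Finset.Icc 1 m).filter (fun a => 2 ∣ a)).powerset with hP
  have hdisj : Disjoint S P := by
    rw [Finset.disjoint_left]
    intro A hA hA'
    have h1 : A.gcd id = 1 := (Finset.mem_filter.1 hA).2
    have h2 : 2 ∣ A.gcd id := Finset.dvd_gcd fun b hb =>
      (Finset.mem_filter.1 ((Finset.mem_powerset.1 hA') hb)).2
    omega
  have hsub : S ∪ P ⊆ (Finset.Icc 1 m).powerset := by
    apply Finset.union_subset
    · exact Finset.filter_subset _ _
    · exact Finset.powerset_mono.2 (Finset.filter_subset _ _)
  have := Finset.card_le_card hsub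
  rw [Finset.card_union_of_disjoint hdisj] at this
  simpa [f, hS, hP, mult_card, Nat.card_Icc] using this

lemma f_lower (m : ℕ) (hm : 2 ≤ m) :
    2 ^ m ≤ f m + 2 ^ (m / 2) + m * 2 ^ (m / 3) := by
  classical
  have hsplit := Finset.card_filter_add_card_filter_not
    (s := (Finset.Icc 1 m).powerset) (p := fun A => A.gcd id = 1)
  have hT : ((Finset.Icc 1 m).powerset.filter (fun A => ¬ A.gcd id = 1)).card
      ≤ 2 ^ (m / 2) + m * 2 ^ (m / 3) := by
    have hsub : (Finset.Icc 1 m).powerset.filter (fun A => ¬ A.gcd id = 1) ⊆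
        (Finset.Icc 2 m).biUnion
          (fun d => ((Finset.Icc 1 m).filter (fun a => d ∣ a)).powerset) := by
      intro A hA
      rw [Finset.mem_filter, Finset.mem_powerset] at hA
      obtain ⟨hAsub, hAgcd⟩ := hA
      rw [Finset.mem_biUnion]
      rcases A.eq_empty_or_nonempty with rfl | ⟨a, ha⟩
      · exact ⟨2, Finset.mem_Icc.2 ⟨le_refl 2, hm⟩, by simp⟩
      · refine ⟨A.gcd id, ?_, ?_⟩
        · have hdvd : A.gcd id ∣ a := Finset.gcd_dvd ha
          have ham : a ∈ Finset.Icc 1 m := hAsub ha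
          rw [Finset.mem_Icc] at ham
          have h0 : A.gcd id ≠ 0 := by
            intro h; rw [h] at hdvd; omega
          have := Nat.le_of_dvd (by omega) hdvd
          rw [Finset.mem_Icc]
          omega
        · rw [Finset.mem_powerset]
          intro b hb
          rw [Finset.mem_filter]
          exact ⟨hAsub hb, Finset.gcd_dvd hb⟩
    calc ((Finset.Icc 1 m).powerset.filter (fun A => ¬ A.gcd id = 1)).card
        ≤ ((Finset.Icc 2 m).biUnion
          (fun d => ((Finset.Icc 1 m).filter (fun a => d ∣ a)).powerset)).card :=
          Finset.card_le_card hsub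
      _ ≤ ∑ d ∈ Finset.Icc 2 m, 2 ^ (m / d) := by
          refine (Finset.card_biUnion_le).trans ?_
          apply Finset.sum_le_sum
          intro d _
          simp [mult_card]
      _ ≤ 2 ^ (m / 2) + m * 2 ^ (m / 3) := by
          rw [show Finset.Icc 2 m = insert 2 (Finset.Icc 3 m) by
              ext x; simp only [Finset.mem_Icc, Finset.mem_insert]; omega,
            Finset.sum_insert (by simp)]
          have h1 : ∑ d ∈ Finset.Icc 3 m, 2 ^ (m / d) ≤ (m - 2) * 2 ^ (m / 3) := by
            have := Finset.sum_le_card_nsmul (Finset.Icc 3 m)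
              (fun d => 2 ^ (m / d)) (2 ^ (m / 3)) ?_
            · simpa [Nat.card_Icc, smul_eq_mul] using this
            · intro d hd
              rw [Finset.mem_Icc] at hd
              exact Nat.pow_le_pow_right (by norm_num) (Nat.div_le_div_left hd.1 (by norm_num))
          have h2 : (m - 2) * 2 ^ (m / 3) ≤ m * 2 ^ (m / 3) :=
            Nat.mul_le_mul_right _ (by omega)
          omega
  have hcard : (Finset.Icc 1 m).powerset.card = 2 ^ m := by
    simp [Nat.card_Icc]
  have hf : f m = ((Finset.Icc 1 m).powerset.filter (fun A => A.gcd id = 1)).card := rfl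
  omega

lemma aux_pow (q : ℕ) (hq : 6 ≤ q) : 6 * q + 5 < 2 ^ q := by
  induction q, hq using Nat.le_induction with
  | base => norm_num
  | succ q hq ih =>
    have : (2:ℕ) ^ (q + 1) = 2 ^ q + 2 ^ q := by ring
    have h6 : 6 ≤ 2 ^ q := le_trans (by norm_num) (Nat.pow_le_pow_right (by norm_num) hq)
    omega

lemma key (n : ℕ) (hn : 36 ≤ n) : n * 2 ^ (n / 3) < 2 ^ (n / 2) := by
  have h1 : n / 3 + n / 6 ≤ n / 2 := by omega
  have h2 : n < 2 ^ (n / 6) := by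
    have ha := aux_pow (n / 6) (by omega)
    omega
  calc n * 2 ^ (n / 3) < 2 ^ (n / 6) * 2 ^ (n / 3) :=
        by exact Nat.mul_lt_mul_of_lt_of_le h2 le_rfl (Nat.pow_pos (by norm_num))
    _ = 2 ^ (n / 6 + n / 3) := (pow_add 2 _ _).symm
    _ ≤ 2 ^ (n / 2) := Nat.pow_le_pow_right (by norm_num) (by omega)

theorem stmt_7 (n : ℕ) (hn : 36 ≤ n) :
    (f n : ℤ) ^ 2 - f (n - 5) * f (n + 5) > 0 := by
  have h := n / 2
  set h := n / 2 with hh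
  have hFlow : (2:ℤ) ^ n ≤ (f n : ℤ) + (2:ℤ) ^ h + (n:ℤ) * (2:ℤ) ^ (n / 3) := by
    exact_mod_cast f_lower n (by omega)
  have hU1 : ((f (n - 5) : ℤ)) + (2:ℤ) ^ ((n - 5) / 2) ≤ (2:ℤ) ^ (n - 5) := by
    exact_mod_cast f_upper (n - 5)
  have hU2 : ((f (n + 5) : ℤ)) + (2:ℤ) ^ ((n + 5) / 2) ≤ (2:ℤ) ^ (n + 5) := by
    exact_mod_cast f_upper (n + 5)
  have hkey : (n:ℤ) * (2:ℤ) ^ (n / 3) < (2:ℤ) ^ h := by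
    exact_mod_cast key n hn
  set s : ℤ := (2:ℤ) ^ (n / 3) with hs
  have hs0 : (0:ℤ) < s := pow_pos (by norm_num) _
  have hF0 : (0:ℤ) ≤ (f n : ℤ) := Nat.cast_nonneg _
  have hF10 : (0:ℤ) ≤ (f (n - 5) : ℤ) := Nat.cast_nonneg _
  have hF20 : (0:ℤ) ≤ (f (n + 5) : ℤ) := Nat.cast_nonneg _
  have hn36 : (36:ℤ) ≤ (n:ℤ) := by exact_mod_cast hn
  rcases Nat.even_or_odd n with ⟨k, hk⟩ | ⟨k, hk⟩
  · -- n = 2h even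
    have hhk : n = 2 * h := by omega
    set y : ℤ := (2:ℤ) ^ (h - 3) with hy
    have hy0 : (0:ℤ) < y := pow_pos (by norm_num) _
    have hy1 : (1:ℤ) ≤ y := one_le_pow₀ (by norm_num)
    have e1 : (2:ℤ) ^ n = 64 * y ^ 2 := by
      rw [hy, ← pow_mul, show (64:ℤ) = 2 ^ 6 from rfl, ← pow_add]; congr 1; omega
    have e2 : (2:ℤ) ^ h = 8 * y := by
      rw [hy, show (8:ℤ) = 2 ^ 3 from rfl, ← pow_add]; congr 1; omega
    have e3 : (2:ℤ) ^ (n - 5) = 2 * y ^ 2 := by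
      rw [hy, ← pow_mul, ← pow_succ']; congr 1; omega
    have e4 : ((n - 5) / 2 : ℕ) = h - 3 := by omega
    have e5 : (2:ℤ) ^ (n + 5) = 2048 * y ^ 2 := by
      rw [hy, ← pow_mul, show (2048:ℤ) = 2 ^ 11 from rfl, ← pow_add]; congr 1; omega
    have e6 : ((n + 5) / 2 : ℕ) = h + 2 := by omega
    have e7 : (2:ℤ) ^ (h + 2) = 32 * y := by
      rw [hy, show (32:ℤ) = 2 ^ 5 from rfl, ← pow_add]; congr 1; omega
    rw [e1, e2] at hFlow
    rw [e4, ← hy, e3] at hU1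
    rw [e6, e7, e5] at hU2
    rw [e2] at hkey
    clear_value s y
    have hns0 : (0:ℤ) ≤ (n:ℤ) * s := mul_nonneg (by linarith) hs0.le
    have hysq : y ≤ y ^ 2 := le_self_pow₀ hy1 (by norm_num)
    have hL0 : (0:ℤ) ≤ 64 * y ^ 2 - 8 * y - (n:ℤ) * s := by linarith
    have hF2 : (64 * y ^ 2 - 8 * y - (n:ℤ) * s) ^ 2 ≤ (f n : ℤ) ^ 2 :=
      pow_le_pow_left₀ hL0 (by linarith) 2
    have hprod : (f (n - 5) : ℤ) * (f (n + 5)) ≤ (2 * y ^ 2 - y) * (2048 * y ^ 2 - 32 * y) := by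
      apply mul_le_mul (by linarith) (by linarith) hF20 (by linarith)
    have h128 : (n:ℤ) * s * y ^ 2 < 8 * y * y ^ 2 :=
      mul_lt_mul_of_pos_right hkey (by positivity)
    have hid : (64 * y ^ 2 - 8 * y - (n:ℤ) * s) ^ 2
          - (2 * y ^ 2 - y) * (2048 * y ^ 2 - 32 * y)
        = 64 * (y * y ^ 2) + 32 * y ^ 2
          + 128 * (8 * y * y ^ 2 - (n:ℤ) * s * y ^ 2)
          + 16 * ((n:ℤ) * s * y) + ((n:ℤ) * s) ^ 2 := by ring
    have t1 : (0:ℤ) < y * y ^ 2 := by positivity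
    have t2 : (0:ℤ) < 8 * y * y ^ 2 - (n:ℤ) * s * y ^ 2 := by linarith
    have t3 : (0:ℤ) ≤ (n:ℤ) * s * y := mul_nonneg hns0 hy0.le
    have t4 : (0:ℤ) ≤ ((n:ℤ) * s) ^ 2 := sq_nonneg _
    have t5 : (0:ℤ) < y ^ 2 := by positivity
    linarith
  · have hhk : n = 2 * h + 1 := by omega
    set y : ℤ := (2:ℤ) ^ (h - 2) with hy
    have hy0 : (0:ℤ) < y := pow_pos (by norm_num) _
    have hy1 : (1:ℤ) ≤ y := one_le_pow₀ (by norm_num)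
    have e1 : (2:ℤ) ^ n = 32 * y ^ 2 := by
      rw [hy, ← pow_mul, show (32:ℤ) = 2 ^ 5 from rfl, ← pow_add]; congr 1; omega
    have e2 : (2:ℤ) ^ h = 4 * y := by
      rw [hy, show (4:ℤ) = 2 ^ 2 from rfl, ← pow_add]; congr 1; omega
    have e3 : (2:ℤ) ^ (n - 5) = y ^ 2 := by
      rw [hy, ← pow_mul]; congr 1; omega
    have e4 : ((n - 5) / 2 : ℕ) = h - 2 := by omega
    have e5 : (2:ℤ) ^ (n + 5) = 1024 * y ^ 2 := by
      rw [hy, ← pow_mul, show (1024:ℤ) = 2 ^ 10 from rfl, ← pow_add]; congr 1; omega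
    have e6 : ((n + 5) / 2 : ℕ) = h + 3 := by omega
    have e7 : (2:ℤ) ^ (h + 3) = 32 * y := by
      rw [hy, show (32:ℤ) = 2 ^ 5 from rfl, ← pow_add]; congr 1; omega
    rw [e1, e2] at hFlow
    rw [e4, ← hy, e3] at hU1
    rw [e6, e7, e5] at hU2
    rw [e2] at hkey
    clear_value s y
    have hns0 : (0:ℤ) ≤ (n:ℤ) * s := mul_nonneg (by linarith) hs0.le
    have hysq : y ≤ y ^ 2 := le_self_pow₀ hy1 (by norm_num)
    have hL0 : (0:ℤ) ≤ 32 * y ^ 2 - 4 * y - (n:ℤ) * s := by linarith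
    have hF2 : (32 * y ^ 2 - 4 * y - (n:ℤ) * s) ^ 2 ≤ (f n : ℤ) ^ 2 :=
      pow_le_pow_left₀ hL0 (by linarith) 2
    have hprod : (f (n - 5) : ℤ) * (f (n + 5)) ≤ (y ^ 2 - y) * (1024 * y ^ 2 - 32 * y) := by
      apply mul_le_mul (by linarith) (by linarith) hF20 (by linarith)
    have h128 : (n:ℤ) * s * y ^ 2 < 4 * y * y ^ 2 :=
      mul_lt_mul_of_pos_right hkey (by positivity)
    have hid : (32 * y ^ 2 - 4 * y - (n:ℤ) * s) ^ 2
          - (y ^ 2 - y) * (1024 * y ^ 2 - 32 * y)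
        = 544 * (y * y ^ 2) - 16 * y ^ 2
          + 64 * (4 * y * y ^ 2 - (n:ℤ) * s * y ^ 2)
          + 8 * ((n:ℤ) * s * y) + ((n:ℤ) * s) ^ 2 := by ring
    have t1 : (0:ℤ) < y * y ^ 2 := by positivity
    have t2 : (0:ℤ) < 4 * y * y ^ 2 - (n:ℤ) * s * y ^ 2 := by linarith
    have t3 : (0:ℤ) ≤ (n:ℤ) * s * y := mul_nonneg hns0 hy0.le
    have t4 : (0:ℤ) ≤ ((n:ℤ) * s) ^ 2 := sq_nonneg _
    have t5 : y ^ 2 ≤ y * y ^ 2 := by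
      have := mul_le_mul_of_nonneg_right hy1 (sq_nonneg y)
      linarith
    linarith
end
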